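/- The root lattice A₂ embeds primitively into the root lattice E₈ with orthogonal complement isometric to E₆. -/
import Mathlib


open Matrix

/-- The bilinear form attached to a Gram matrix `G`. -/
def BF {ι : Type*} [Fintype ι] (G : Matrix ι ι ℤ) (x y : ι → ℤ) : ℤ :=
  x ⬝ᵥ G.mulVec y

/-- The hyperbolic plane `U`. -/
def UMat : Matrix (Fin 2) (Fin 2) ℤ := !![0, 1; 1, 0]

/-- The (negative definite) root lattice `A₁`. -/
def A1Mat : Matrix (Fin 1) (Fin 1) ℤ := !![-2]

/-- The (negative definite) root lattice `A₂`. -/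
def A2Mat : Matrix (Fin 2) (Fin 2) ℤ := !![-2, 1; 1, -2]

/-- The negative definite root lattice `E₈` (Bourbaki numbering). -/
def E8Mat : Matrix (Fin 8) (Fin 8) ℤ :=
  !![-2,0,1,0,0,0,0,0;
     0,-2,0,1,0,0,0,0;
     1,0,-2,1,0,0,0,0;
     0,1,1,-2,1,0,0,0;
     0,0,0,1,-2,1,0,0;
     0,0,0,0,1,-2,1,0;
     0,0,0,0,0,1,-2,1;
     0,0,0,0,0,0,1,-2]

/-- The negative definite root lattice `E₇` (first seven Bourbaki nodes of `E₈`). -/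
def E7Mat : Matrix (Fin 7) (Fin 7) ℤ :=
  E8Mat.submatrix (Fin.castLE (by norm_num)) (Fin.castLE (by norm_num))

/-- The negative definite root lattice `E₆` (first six Bourbaki nodes of `E₈`). -/
def E6Mat : Matrix (Fin 6) (Fin 6) ℤ :=
  E8Mat.submatrix (Fin.castLE (by norm_num)) (Fin.castLE (by norm_num))

/-- Orthogonal direct sum of Gram matrices. -/
def dsum {ι κ : Type*} (G : Matrix ι ι ℤ) (H : Matrix κ κ ℤ) :
    Matrix (ι ⊕ κ) (ι ⊕ κ) ℤ :=
  Matrix.fromBlocks G 0 0 H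

/-- Index type for the K3 lattice `U^{⊕3} ⊕ E₈^{⊕2}`. -/
abbrev K3Ix : Type := (Fin 2 ⊕ Fin 2 ⊕ Fin 2) ⊕ (Fin 8 ⊕ Fin 8)

/-- Gram matrix of the K3 lattice `U^{⊕3} ⊕ E₈^{⊕2}`. -/
def K3Mat : Matrix K3Ix K3Ix ℤ := dsum (dsum UMat (dsum UMat UMat)) (dsum E8Mat E8Mat)

/-- `f` is a primitive isometric embedding of the lattice with Gram matrix `G`
into the lattice with Gram matrix `H` (primitive: the image is closed under division). -/
def IsPrimEmb {ι κ : Type*} [Fintype ι] [Fintype κ] (G : Matrix ι ι ℤ) (H : Matrix κ κ ℤ)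
    (f : (ι → ℤ) →ₗ[ℤ] (κ → ℤ)) : Prop :=
  Function.Injective f ∧ (∀ x y, BF H (f x) (f y) = BF G x y) ∧
    ∀ (c : ℤ) (x : κ → ℤ), c ≠ 0 → c • x ∈ LinearMap.range f → x ∈ LinearMap.range f

/-- The orthogonal complement of a submodule with respect to the form given by `H`. -/
def orthComp {κ : Type*} [Fintype κ] (H : Matrix κ κ ℤ) (S : Submodule ℤ (κ → ℤ)) :
    Submodule ℤ (κ → ℤ) where
  carrier := {x | ∀ y ∈ S, BF H x y = 0}
  add_mem' := by
    intro a b ha hb y hy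
    have h1 := ha y hy
    have h2 := hb y hy
    simp only [BF, add_dotProduct] at *
    omega
  zero_mem' := by
    intro y hy
    simp [BF]
  smul_mem' := by
    intro c a ha y hy
    have h1 := ha y hy
    simp only [BF, smul_dotProduct] at *
    simp [h1]

/-- The two lattices given by Gram matrices `G`, `H` are isometric. -/
def IsomGram {ι κ : Type*} [Fintype ι] [Fintype κ] (G : Matrix ι ι ℤ) (H : Matrix κ κ ℤ) : Prop :=
  ∃ e : (ι → ℤ) ≃ₗ[ℤ] (κ → ℤ), ∀ x y, BF H (e x) (e y) = BF G x y

/-- The submodule `S` of the lattice with Gram matrix `H`, equipped with the restricted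
form, is isometric to the lattice with Gram matrix `G`. -/
def SubIsom {ι κ : Type*} [Fintype ι] [Fintype κ] (H : Matrix κ κ ℤ)
    (S : Submodule ℤ (κ → ℤ)) (G : Matrix ι ι ℤ) : Prop :=
  ∃ e : (ι → ℤ) ≃ₗ[ℤ] S, ∀ x y, BF H (e x : κ → ℤ) (e y : κ → ℤ) = BF G x y

/-- The lattice with Gram matrix `G` is even. -/
def EvenGram {ι : Type*} [Fintype ι] (G : Matrix ι ι ℤ) : Prop := ∀ x, 2 ∣ BF G x x

/-- The lattice with Gram matrix `G` has signature `(p, q)`. -/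
def SigIs {ι : Type*} [Fintype ι] [DecidableEq ι] (G : Matrix ι ι ℤ) (p q : ℕ) : Prop :=
  ∃ d : ι → ℝ, (∀ i, d i = 1 ∨ d i = -1) ∧ Nat.card {i // d i = 1} = p ∧
    Nat.card {i // d i = -1} = q ∧
    ∃ P : Matrix ι ι ℝ, IsUnit P.det ∧
      Pᵀ * (G.map (Int.cast : ℤ → ℝ)) * P = Matrix.diagonal d

/-- The discriminant group `A_L = L^*/L` of a lattice with Gram matrix `G`,
realized as the cokernel of `G`. -/
abbrev Coker {ι : Type*} [Fintype ι] [DecidableEq ι] (G : Matrix ι ι ℤ) :=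
  (ι → ℤ) ⧸ LinearMap.range (Matrix.toLin' G)

/-- The value `x᷉ᵀ G⁻¹ x` of the discriminant quadratic form at (the class of) `x`. -/
noncomputable def qval {ι : Type*} [Fintype ι] [DecidableEq ι] (G : Matrix ι ι ℤ) (x : ι → ℤ) : ℚ :=
  (fun i => (x i : ℚ)) ⬝ᵥ ((G.map (Int.cast : ℤ → ℚ))⁻¹).mulVec (fun i => (x i : ℚ))

/-- The discriminant form of `G` is isomorphic to minus the discriminant form of `H`. -/
def QIsoNeg {ι κ : Type*} [Fintype ι] [DecidableEq ι] [Fintype κ] [DecidableEq κ]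
    (G : Matrix ι ι ℤ) (H : Matrix κ κ ℤ) : Prop :=
  ∃ e : Coker G ≃+ Coker H, ∀ x : ι → ℤ, ∃ y : κ → ℤ,
    e (Submodule.Quotient.mk x) = Submodule.Quotient.mk y ∧
    qval G x + qval H y ∈ AddSubgroup.zmultiples (2 : ℚ)

/-- Inclusion of the first `U` summand into the K3 lattice. -/
def inU1 (x : Fin 2 → ℤ) : K3Ix → ℤ := Sum.elim (Sum.elim x 0) 0

/-- Inclusion of the first `E₈` summand into the K3 lattice. -/
def inE81 (x : Fin 8 → ℤ) : K3Ix → ℤ := Sum.elim 0 (Sum.elim x 0)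

/-- Inclusion of the second `E₈` summand into the K3 lattice. -/
def inE82 (x : Fin 8 → ℤ) : K3Ix → ℤ := Sum.elim 0 (Sum.elim 0 x)

lemma fs1_0 : ((0 : Fin 1)).succ = (1 : Fin 2) := rfl
lemma fs2_0 : ((0 : Fin 2)).succ = (1 : Fin 3) := rfl
lemma fs2_1 : ((1 : Fin 2)).succ = (2 : Fin 3) := rfl
lemma fs3_0 : ((0 : Fin 3)).succ = (1 : Fin 4) := rfl
lemma fs3_1 : ((1 : Fin 3)).succ = (2 : Fin 4) := rfl
lemma fs3_2 : ((2 : Fin 3)).succ = (3 : Fin 4) := rfl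
lemma fs4_0 : ((0 : Fin 4)).succ = (1 : Fin 5) := rfl
lemma fs4_1 : ((1 : Fin 4)).succ = (2 : Fin 5) := rfl
lemma fs4_2 : ((2 : Fin 4)).succ = (3 : Fin 5) := rfl
lemma fs4_3 : ((3 : Fin 4)).succ = (4 : Fin 5) := rfl
lemma fs5_0 : ((0 : Fin 5)).succ = (1 : Fin 6) := rfl
lemma fs5_1 : ((1 : Fin 5)).succ = (2 : Fin 6) := rfl
lemma fs5_2 : ((2 : Fin 5)).succ = (3 : Fin 6) := rfl
lemma fs5_3 : ((3 : Fin 5)).succ = (4 : Fin 6) := rfl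
lemma fs5_4 : ((4 : Fin 5)).succ = (5 : Fin 6) := rfl
lemma fs6_0 : ((0 : Fin 6)).succ = (1 : Fin 7) := rfl
lemma fs6_1 : ((1 : Fin 6)).succ = (2 : Fin 7) := rfl
lemma fs6_2 : ((2 : Fin 6)).succ = (3 : Fin 7) := rfl
lemma fs6_3 : ((3 : Fin 6)).succ = (4 : Fin 7) := rfl
lemma fs6_4 : ((4 : Fin 6)).succ = (5 : Fin 7) := rfl
lemma fs6_5 : ((5 : Fin 6)).succ = (6 : Fin 7) := rfl
lemma fs7_0 : ((0 : Fin 7)).succ = (1 : Fin 8) := rfl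
lemma fs7_1 : ((1 : Fin 7)).succ = (2 : Fin 8) := rfl
lemma fs7_2 : ((2 : Fin 7)).succ = (3 : Fin 8) := rfl
lemma fs7_3 : ((3 : Fin 7)).succ = (4 : Fin 8) := rfl
lemma fs7_4 : ((4 : Fin 7)).succ = (5 : Fin 8) := rfl
lemma fs7_5 : ((5 : Fin 7)).succ = (6 : Fin 8) := rfl
lemma fs7_6 : ((6 : Fin 7)).succ = (7 : Fin 8) := rfl

lemma E6Mat_eq : E6Mat =
    !![-2,0,1,0,0,0; 0,-2,0,1,0,0; 1,0,-2,1,0,0; 0,1,1,-2,1,0; 0,0,0,1,-2,1; 0,0,0,0,1,-2] := by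
  ext i j
  fin_cases i <;> fin_cases j <;> rfl

/-- Embedding of `A₂` into `E₈`: basis vectors go to
`w₁ = (2,3,4,6,5,4,3,2)` and `w₂ = -e₈`. -/
def fA2 : (Fin 2 → ℤ) →ₗ[ℤ] (Fin 8 → ℤ) where
  toFun x := fun i => ![2,3,4,6,5,4,3,2] i * x 0 + ![0,0,0,0,0,0,0,-1] i * x 1
  map_add' a b := by
    funext i; simp only [Pi.add_apply]; ring
  map_smul' c a := by
    funext i; simp only [Pi.smul_apply, smul_eq_mul, RingHom.id_apply]; ring

/-- Extension by zero `ℤ⁶ → ℤ⁸`. -/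
def ext6 (y : Fin 6 → ℤ) : Fin 8 → ℤ := ![y 0, y 1, y 2, y 3, y 4, y 5, 0, 0]

lemma ext6_mem (y : Fin 6 → ℤ) :
    ext6 y ∈ orthComp E8Mat (LinearMap.range fA2) := by
  rintro z ⟨a, rfl⟩
  show BF E8Mat (ext6 y) (fA2 a) = 0
  simp only [BF, E8Mat, fA2, ext6, Matrix.mulVec, dotProduct,
    Fin.sum_univ_succ,
    Matrix.cons_val_zero, Matrix.cons_val_one, Matrix.cons_val_succ, Matrix.cons_val', Matrix.cons_val_fin_one,
    Matrix.empty_val', Matrix.head_cons, Matrix.head_fin_const, Matrix.of_apply,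
    Fin.sum_univ_zero, LinearMap.coe_mk, AddHom.coe_mk,
    fs1_0, fs2_0, fs2_1, fs3_0, fs3_1, fs3_2, fs4_0, fs4_1, fs4_2, fs4_3,
    fs5_0, fs5_1, fs5_2, fs5_3, fs5_4, fs6_0, fs6_1, fs6_2, fs6_3, fs6_4, fs6_5,
    fs7_0, fs7_1, fs7_2, fs7_3, fs7_4, fs7_5, fs7_6]
  ring

/-- The root lattice `A₂` embeds primitively into `E₈` with orthogonal complement
isometric to `E₆`. -/
theorem stmt7 : ∃ f : (Fin 2 → ℤ) →ₗ[ℤ] (Fin 8 → ℤ),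
    IsPrimEmb A2Mat E8Mat f ∧
    SubIsom E8Mat (orthComp E8Mat (LinearMap.range f)) E6Mat := by
  refine ⟨fA2, ⟨?_, ?_, ?_⟩, ?_⟩
  · -- injective
    intro a b h
    have h6 : 3 * a 0 + 0 * a 1 = 3 * b 0 + 0 * b 1 := congrFun h 6
    have h7 : 2 * a 0 + (-1) * a 1 = 2 * b 0 + (-1) * b 1 := congrFun h 7
    have ha0 : a 0 = b 0 := by omega
    have ha1 : a 1 = b 1 := by omega
    funext i
    fin_cases i
    · exact ha0
    · exact ha1
  · -- isometry
    intro a b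
    simp only [BF, E8Mat, A2Mat, fA2, Matrix.mulVec, dotProduct,
      Fin.sum_univ_succ,
      Matrix.cons_val_zero, Matrix.cons_val_one, Matrix.cons_val_succ, Matrix.cons_val', Matrix.cons_val_fin_one,
      Matrix.empty_val', Matrix.head_cons, Matrix.head_fin_const, Matrix.of_apply,
      Fin.sum_univ_zero, LinearMap.coe_mk, AddHom.coe_mk,
      fs1_0, fs2_0, fs2_1, fs3_0, fs3_1, fs3_2, fs4_0, fs4_1, fs4_2, fs4_3,
      fs5_0, fs5_1, fs5_2, fs5_3, fs5_4, fs6_0, fs6_1, fs6_2, fs6_3, fs6_4, fs6_5,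
      fs7_0, fs7_1, fs7_2, fs7_3, fs7_4, fs7_5, fs7_6]
    ring
  · -- primitive
    rintro c x hc ⟨a, ha⟩
    have h0 : 2 * a 0 + 0 * a 1 = c * x 0 := congrFun ha 0
    have h1 : 3 * a 0 + 0 * a 1 = c * x 1 := congrFun ha 1
    have h7 : 2 * a 0 + (-1) * a 1 = c * x 7 := congrFun ha 7
    have e0 : c * (x 1 - x 0) = a 0 := by linear_combination h0 - h1
    have e1 : c * (2 * (x 1 - x 0) - x 7) = a 1 := by linear_combination 2 * h0 - 2 * h1 + h7
    refine ⟨![x 1 - x 0, 2 * (x 1 - x 0) - x 7], ?_⟩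
    have hcb : c • ![x 1 - x 0, 2 * (x 1 - x 0) - x 7] = a := by
      funext i
      fin_cases i
      · exact e0
      · exact e1
    have h2 : c • fA2 ![x 1 - x 0, 2 * (x 1 - x 0) - x 7] = c • x := by
      rw [← LinearMap.map_smul, hcb, ha]
    exact smul_right_injective _ hc h2
  · -- complement is E6
    refine ⟨{ toFun := fun y => ⟨ext6 y, ext6_mem y⟩
              invFun := fun x => fun j => x.1 ⟨j.1, by omega⟩
              map_add' := by
                intro a b; ext i; fin_cases i <;> first | rfl | exact (zero_add (0:ℤ)).symm
              map_smul' := by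
                intro c a; ext i; fin_cases i <;> first | rfl | exact (mul_zero c).symm
              left_inv := by
                intro y; funext j; fin_cases j <;> rfl
              right_inv := by
                rintro ⟨x, hx⟩
                have h1 : BF E8Mat x (fA2 ![1, 0]) = 0 := hx _ ⟨![1, 0], rfl⟩
                have h2 : BF E8Mat x (fA2 ![0, 1]) = 0 := hx _ ⟨![0, 1], rfl⟩
                simp only [BF, E8Mat, fA2, Matrix.mulVec, dotProduct,
                  Fin.sum_univ_succ,
                  Matrix.cons_val_zero, Matrix.cons_val_one, Matrix.cons_val_succ, Matrix.cons_val',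
                  Matrix.cons_val_fin_one, Matrix.empty_val', Matrix.head_cons,
                  Matrix.head_fin_const, Matrix.of_apply, Fin.sum_univ_zero,
                  LinearMap.coe_mk, AddHom.coe_mk,
                  fs1_0, fs2_0, fs2_1, fs3_0, fs3_1, fs3_2, fs4_0, fs4_1, fs4_2, fs4_3,
                  fs5_0, fs5_1, fs5_2, fs5_3, fs5_4, fs6_0, fs6_1, fs6_2, fs6_3, fs6_4, fs6_5,
                  fs7_0, fs7_1, fs7_2, fs7_3, fs7_4, fs7_5, fs7_6] at h1 h2
                ring_nf at h1 h2
                have hx7 : x 7 = 0 := by omega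
                have hx6 : x 6 = 0 := by omega
                have hx6 : x 6 = 0 := by omega
                ext i
                fin_cases i <;> first | rfl | exact hx6.symm | exact hx7.symm }, ?_⟩
    intro a b
    show BF E8Mat (ext6 a) (ext6 b) = BF E6Mat a b
    rw [E6Mat_eq]
    simp only [BF, E8Mat, ext6, Matrix.mulVec, dotProduct,
      Fin.sum_univ_succ,
      Matrix.cons_val_zero, Matrix.cons_val_one, Matrix.cons_val_succ, Matrix.cons_val', Matrix.cons_val_fin_one,
      Matrix.empty_val', Matrix.head_cons, Matrix.head_fin_const, Matrix.of_apply,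
      Fin.sum_univ_zero,
      fs1_0, fs2_0, fs2_1, fs3_0, fs3_1, fs3_2, fs4_0, fs4_1, fs4_2, fs4_3,
      fs5_0, fs5_1, fs5_2, fs5_3, fs5_4, fs6_0, fs6_1, fs6_2, fs6_3, fs6_4, fs6_5,
      fs7_0, fs7_1, fs7_2, fs7_3, fs7_4, fs7_5, fs7_6]
    ring
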